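/- Let D ⊂ ℝ^d be a nonempty bounded open set. If u ∈ L^∞(D; ℝ^{d_u}) then A(u) ∈ L^∞(D; ℝ^{d_V}) with ‖A(u)‖_{L^∞} ≤ ‖V‖ ‖u‖_{L^∞}, where ‖V‖ denotes the operator norm of V. Furthermore, if u ∈ C(D̄; ℝ^{d_u}) then A(u) is (extends to) an element of C(D̄; ℝ^{d_V}). -/

import Mathlib

open MeasureTheory Filter

noncomputable section

def emulVec {m n : ℕ} (M : Matrix (Fin m) (Fin n) ℝ) (v : EuclideanSpace ℝ (Fin n)) :
    EuclideanSpace ℝ (Fin m) :=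
  WithLp.toLp 2 (fun i => M.mulVec (fun j => v j) i)

def selfAttn {d du dK dV : ℕ} (D : Set (EuclideanSpace ℝ (Fin d)))
    (Q K : Matrix (Fin dK) (Fin du) ℝ) (V : Matrix (Fin dV) (Fin du) ℝ)
    (u : EuclideanSpace ℝ (Fin d) → EuclideanSpace ℝ (Fin du))
    (x : EuclideanSpace ℝ (Fin d)) : EuclideanSpace ℝ (Fin dV) :=
  (∫ s in D, Real.exp ((inner ℝ (emulVec Q (u x)) (emulVec K (u s)) : ℝ)))⁻¹ •
    ∫ y in D, Real.exp ((inner ℝ (emulVec Q (u x)) (emulVec K (u y)) : ℝ)) • emulVec V (u y)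

/-- The operator norm of a matrix, viewed as a linear map between Euclidean spaces. -/
def matOpNorm {m n : ℕ} (V : Matrix (Fin m) (Fin n) ℝ) : ℝ :=
  ‖LinearMap.toContinuousLinearMap (Matrix.toEuclideanLin V)‖

lemma emulVec_eq {m n : ℕ} (M : Matrix (Fin m) (Fin n) ℝ) (v : EuclideanSpace ℝ (Fin n)) :
    emulVec M v = (LinearMap.toContinuousLinearMap (Matrix.toEuclideanLin M)) v := rfl

lemma emulVec_norm_le {m n : ℕ} (M : Matrix (Fin m) (Fin n) ℝ) (v : EuclideanSpace ℝ (Fin n)) :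
    ‖emulVec M v‖ ≤ matOpNorm M * ‖v‖ := by
  rw [emulVec_eq]
  exact ContinuousLinearMap.le_opNorm _ v

lemma emulVec_continuous {m n : ℕ} (M : Matrix (Fin m) (Fin n) ℝ) :
    Continuous (emulVec M) := by
  have h : emulVec M = ⇑(LinearMap.toContinuousLinearMap (Matrix.toEuclideanLin M)) := by
    funext v; exact emulVec_eq M v
  rw [h]
  exact (LinearMap.toContinuousLinearMap (Matrix.toEuclideanLin M)).continuous

lemma matOpNorm_nonneg {m n : ℕ} (M : Matrix (Fin m) (Fin n) ℝ) : 0 ≤ matOpNorm M :=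
  norm_nonneg _

lemma emulVec_norm_le' {m n : ℕ} (M : Matrix (Fin m) (Fin n) ℝ)
    {v : EuclideanSpace ℝ (Fin n)} {a : ℝ} (ha : ‖v‖ ≤ a) :
    ‖emulVec M v‖ ≤ matOpNorm M * a :=
  (emulVec_norm_le M v).trans (mul_le_mul_of_nonneg_left ha (matOpNorm_nonneg M))

lemma inner_abs_le {du dK : ℕ} (Q K : Matrix (Fin dK) (Fin du) ℝ)
    (v w : EuclideanSpace ℝ (Fin du)) {a b : ℝ} (ha : ‖v‖ ≤ a) (hb : ‖w‖ ≤ b) (hb0 : 0 ≤ b) :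
    |(inner ℝ (emulVec Q v) (emulVec K w) : ℝ)| ≤ matOpNorm Q * a * (matOpNorm K * b) := by
  refine (abs_real_inner_le_norm _ _).trans ?_
  exact mul_le_mul (emulVec_norm_le' Q ha) (emulVec_norm_le' K hb) (norm_nonneg _)
    (mul_nonneg (matOpNorm_nonneg Q) ((norm_nonneg v).trans ha))

section Main

variable {d du dK dV : ℕ} {D : Set (EuclideanSpace ℝ (Fin d))}
  {Q K : Matrix (Fin dK) (Fin du) ℝ} {V : Matrix (Fin dV) (Fin du) ℝ}
  {u : EuclideanSpace ℝ (Fin d) → EuclideanSpace ℝ (Fin du)}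

/-- Lower bound / positivity for the denominator. -/
lemma den_pos (hpos : 0 < volume D) (hfin : volume D < ⊤)
    (hu : AEStronglyMeasurable u (volume.restrict D)) {M : ℝ} (hM : 0 ≤ M)
    (hbM : ∀ᵐ y ∂(volume.restrict D), ‖u y‖ ≤ M) (x : EuclideanSpace ℝ (Fin d))
    {c : ℝ} (hc : matOpNorm Q * ‖u x‖ * (matOpNorm K * M) ≤ c) :
    Real.exp (-c) * (volume D).toReal ≤
      ∫ s in D, Real.exp ((inner ℝ (emulVec Q (u x)) (emulVec K (u s)) : ℝ)) ∧
    Integrable (fun s => Real.exp ((inner ℝ (emulVec Q (u x)) (emulVec K (u s)) : ℝ)))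
      (volume.restrict D) := by
  set μ := volume.restrict D
  have hgm : AEStronglyMeasurable
      (fun s => Real.exp ((inner ℝ (emulVec Q (u x)) (emulVec K (u s)) : ℝ))) μ := by
    have hcont : Continuous fun v : EuclideanSpace ℝ (Fin du) =>
        Real.exp ((inner ℝ (emulVec Q (u x)) (emulVec K v) : ℝ)) :=
      Real.continuous_exp.comp (continuous_const.inner (emulVec_continuous K))
    exact hcont.comp_aestronglyMeasurable hu
  have habs : ∀ᵐ y ∂μ, |(inner ℝ (emulVec Q (u x)) (emulVec K (u y)) : ℝ)| ≤ c :=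
    hbM.mono fun y hy => (inner_abs_le Q K _ _ le_rfl hy hM).trans hc
  have hub : ∀ᵐ y ∂μ, Real.exp ((inner ℝ (emulVec Q (u x)) (emulVec K (u y)) : ℝ)) ≤ Real.exp c :=
    habs.mono fun y hy => Real.exp_le_exp.mpr ((le_abs_self _).trans hy)
  have hlb : ∀ᵐ y ∂μ, Real.exp (-c) ≤ Real.exp ((inner ℝ (emulVec Q (u x)) (emulVec K (u y)) : ℝ)) :=
    habs.mono fun y hy => Real.exp_le_exp.mpr (neg_le_of_abs_le hy)
  haveI : IsFiniteMeasure μ := ⟨by simpa [μ, Measure.restrict_apply_univ] using hfin⟩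
  have hint : Integrable (fun s => Real.exp ((inner ℝ (emulVec Q (u x)) (emulVec K (u s)) : ℝ))) μ := by
    refine (integrable_const (Real.exp c)).mono' hgm ?_
    exact hub.mono fun y hy => by
      rw [Real.norm_eq_abs, abs_of_pos (Real.exp_pos _)]; exact hy
  refine ⟨?_, hint⟩
  have := integral_mono_ae (integrable_const (Real.exp (-c))) hint hlb
  rwa [integral_const, measureReal_restrict_apply_univ, smul_eq_mul, mul_comm, measureReal_def] at this

/-- Pointwise bound for the self-attention operator. -/
lemma selfAttn_norm_le (hpos : 0 < volume D) (hfin : volume D < ⊤)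
    (hu : AEStronglyMeasurable u (volume.restrict D)) {M : ℝ} (hM : 0 ≤ M)
    (hbM : ∀ᵐ y ∂(volume.restrict D), ‖u y‖ ≤ M) (x : EuclideanSpace ℝ (Fin d)) :
    ‖selfAttn D Q K V u x‖ ≤ matOpNorm V * M := by
  set μ := volume.restrict D
  obtain ⟨hlbd, hint⟩ := den_pos (Q := Q) (K := K) hpos hfin hu hM hbM x le_rfl
  set den := ∫ s in D, Real.exp ((inner ℝ (emulVec Q (u x)) (emulVec K (u s)) : ℝ)) with hdendef
  have hdpos : 0 < den := by
    refine lt_of_lt_of_le ?_ hlbd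
    have h0 : 0 < (volume D).toReal := ENNReal.toReal_pos hpos.ne' hfin.ne
    positivity
  have hnum : ‖∫ y in D, Real.exp ((inner ℝ (emulVec Q (u x)) (emulVec K (u y)) : ℝ)) •
      emulVec V (u y)‖ ≤ (matOpNorm V * M) * den := by
    have hb : ∀ᵐ y ∂μ, ‖Real.exp ((inner ℝ (emulVec Q (u x)) (emulVec K (u y)) : ℝ)) •
        emulVec V (u y)‖ ≤ (matOpNorm V * M) *
          Real.exp ((inner ℝ (emulVec Q (u x)) (emulVec K (u y)) : ℝ)) := by
      refine hbM.mono fun y hy => ?_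
      rw [norm_smul, Real.norm_eq_abs, abs_of_pos (Real.exp_pos _)]
      calc Real.exp _ * ‖emulVec V (u y)‖ ≤ Real.exp _ * (matOpNorm V * M) :=
            mul_le_mul_of_nonneg_left (emulVec_norm_le' V hy) (Real.exp_pos _).le
        _ = (matOpNorm V * M) * Real.exp _ := mul_comm _ _
    have h := norm_integral_le_of_norm_le (hint.const_mul (matOpNorm V * M)) hb
    rwa [integral_const_mul] at h
  have hform : selfAttn D Q K V u x = den⁻¹ • ∫ y in D,
      Real.exp ((inner ℝ (emulVec Q (u x)) (emulVec K (u y)) : ℝ)) • emulVec V (u y) := rfl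
  rw [hform, norm_smul, Real.norm_eq_abs, abs_of_pos (inv_pos.mpr hdpos)]
  calc den⁻¹ * ‖∫ y in D, Real.exp ((inner ℝ (emulVec Q (u x)) (emulVec K (u y)) : ℝ)) •
        emulVec V (u y)‖ ≤ den⁻¹ * ((matOpNorm V * M) * den) :=
        mul_le_mul_of_nonneg_left hnum (inv_pos.mpr hdpos).le
    _ = matOpNorm V * M := by field_simp

end Main

theorem self_attention_bounded_and_continuous {d du dK dV : ℕ}
    (D : Set (EuclideanSpace ℝ (Fin d)))
    (hDo : IsOpen D) (hDb : Bornology.IsBounded D) (hDne : D.Nonempty)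
    (Q K : Matrix (Fin dK) (Fin du) ℝ) (V : Matrix (Fin dV) (Fin du) ℝ)
    (u : EuclideanSpace ℝ (Fin d) → EuclideanSpace ℝ (Fin du)) :
    (MemLp u ⊤ (volume.restrict D) →
      MemLp (selfAttn D Q K V u) ⊤ (volume.restrict D) ∧
      eLpNorm (selfAttn D Q K V u) ⊤ (volume.restrict D) ≤
        ENNReal.ofReal (matOpNorm V) * eLpNorm u ⊤ (volume.restrict D)) ∧
    (ContinuousOn u (closure D) → ContinuousOn (selfAttn D Q K V u) (closure D)) := by
  set μ := volume.restrict D with hμ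
  have hpos : 0 < volume D := hDo.measure_pos volume hDne
  have hfin : volume D < ⊤ := hDb.measure_lt_top
  haveI : IsFiniteMeasure μ := ⟨by simpa [hμ, Measure.restrict_apply_univ] using hfin⟩
  constructor
  · -- boundedness part
    intro hu
    have huAE : AEStronglyMeasurable u μ := hu.1
    set M := (eLpNorm u ⊤ μ).toReal with hMdef
    have hM : 0 ≤ M := ENNReal.toReal_nonneg
    have hbM : ∀ᵐ y ∂μ, ‖u y‖ ≤ M := by
      have hfin2 : eLpNormEssSup u μ ≠ ⊤ := by
        have h2 := hu.2
        rw [eLpNorm_exponent_top] at h2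
        exact h2.ne
      refine (ae_le_eLpNormEssSup (f := u) (μ := μ)).mono fun y hy => ?_
      have h3 : ((‖u y‖₊ : ENNReal)).toReal ≤ (eLpNormEssSup u μ).toReal :=
        ENNReal.toReal_mono hfin2 hy
      rw [ENNReal.coe_toReal, coe_nnnorm] at h3
      rw [hMdef, eLpNorm_exponent_top]
      exact h3
    have hbd : ∀ x, ‖selfAttn D Q K V u x‖ ≤ matOpNorm V * M := fun x =>
      selfAttn_norm_le hpos hfin huAE hM hbM x
    -- measurability of selfAttn
    have hmeas : AEStronglyMeasurable (selfAttn D Q K V u) μ := by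
      have h1 : AEStronglyMeasurable
          (fun p : EuclideanSpace ℝ (Fin d) × EuclideanSpace ℝ (Fin d) =>
            Real.exp ((inner ℝ (emulVec Q (u p.1)) (emulVec K (u p.2)) : ℝ))) (μ.prod μ) := by
        have hq : AEStronglyMeasurable (fun p :
            EuclideanSpace ℝ (Fin d) × EuclideanSpace ℝ (Fin d) => emulVec Q (u p.1)) (μ.prod μ) :=
          (emulVec_continuous Q).comp_aestronglyMeasurable huAE.comp_fst
        have hk : AEStronglyMeasurable (fun p :
            EuclideanSpace ℝ (Fin d) × EuclideanSpace ℝ (Fin d) => emulVec K (u p.2)) (μ.prod μ) :=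
          (emulVec_continuous K).comp_aestronglyMeasurable huAE.comp_snd
        exact Real.continuous_exp.comp_aestronglyMeasurable (hq.inner hk)
      have hV : AEStronglyMeasurable (fun p :
          EuclideanSpace ℝ (Fin d) × EuclideanSpace ℝ (Fin d) => emulVec V (u p.2)) (μ.prod μ) :=
        (emulVec_continuous V).comp_aestronglyMeasurable huAE.comp_snd
      have hnum : AEStronglyMeasurable (fun x => ∫ y in D,
          Real.exp ((inner ℝ (emulVec Q (u x)) (emulVec K (u y)) : ℝ)) • emulVec V (u y)) μ :=
        (h1.smul hV).integral_prod_right'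
      have hden : AEStronglyMeasurable (fun x => ∫ s in D,
          Real.exp ((inner ℝ (emulVec Q (u x)) (emulVec K (u s)) : ℝ))) μ :=
        h1.integral_prod_right'
      have hdeninv : AEStronglyMeasurable (fun x => (∫ s in D,
          Real.exp ((inner ℝ (emulVec Q (u x)) (emulVec K (u s)) : ℝ)))⁻¹) μ :=
        (hden.aemeasurable.inv).aestronglyMeasurable
      exact hdeninv.smul hnum
    have hsnorm : eLpNorm (selfAttn D Q K V u) ⊤ μ ≤ ENNReal.ofReal (matOpNorm V * M) := by
      rw [eLpNorm_exponent_top]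
      exact eLpNormEssSup_le_of_ae_bound (ae_of_all _ hbd)
    refine ⟨⟨hmeas, lt_of_le_of_lt hsnorm ENNReal.ofReal_lt_top⟩, ?_⟩
    refine hsnorm.trans ?_
    rw [ENNReal.ofReal_mul (matOpNorm_nonneg V)]
    exact mul_le_mul_right (ENNReal.ofReal_toReal_le) _
  · -- continuity part
    intro hc
    have hcc : IsCompact (closure D) := hDb.isCompact_closure
    obtain ⟨C, hC⟩ := hcc.exists_bound_of_continuousOn hc
    set M := max C 0 with hMdef
    have hM : 0 ≤ M := le_max_right _ _
    have hC' : ∀ z ∈ closure D, ‖u z‖ ≤ M := fun z hz => (hC z hz).trans (le_max_left _ _)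
    have huAE : AEStronglyMeasurable u μ :=
      (hc.mono subset_closure).aestronglyMeasurable hDo.measurableSet
    have hbM : ∀ᵐ y ∂μ, ‖u y‖ ≤ M :=
      (ae_restrict_mem hDo.measurableSet).mono fun y hy => hC' y (subset_closure hy)
    set c := matOpNorm Q * M * (matOpNorm K * M) with hcdef
    -- measurability in y for each fixed x
    have hgm : ∀ x : EuclideanSpace ℝ (Fin d), AEStronglyMeasurable
        (fun y => Real.exp ((inner ℝ (emulVec Q (u x)) (emulVec K (u y)) : ℝ))) μ := by
      intro x
      have hcont : Continuous fun v : EuclideanSpace ℝ (Fin du) =>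
          Real.exp ((inner ℝ (emulVec Q (u x)) (emulVec K v) : ℝ)) :=
        Real.continuous_exp.comp (continuous_const.inner (emulVec_continuous K))
      exact hcont.comp_aestronglyMeasurable huAE
    have hVAE : AEStronglyMeasurable (fun y => emulVec V (u y)) μ :=
      (emulVec_continuous V).comp_aestronglyMeasurable huAE
    -- a.e. bound valid for all x in closure D
    have hub : ∀ x ∈ closure D, ∀ᵐ y ∂μ,
        Real.exp ((inner ℝ (emulVec Q (u x)) (emulVec K (u y)) : ℝ)) ≤ Real.exp c := by
      intro x hx
      refine hbM.mono fun y hy => Real.exp_le_exp.mpr ?_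
      refine (le_abs_self _).trans ?_
      exact inner_abs_le Q K _ _ (hC' x hx) hy hM
    -- continuity of the denominator
    have hden : ContinuousOn (fun x => ∫ s in D,
        Real.exp ((inner ℝ (emulVec Q (u x)) (emulVec K (u s)) : ℝ))) (closure D) := by
      intro x0 hx0
      refine continuousWithinAt_of_dominated (bound := fun _ => Real.exp c)
        (Eventually.of_forall hgm) ?_ (integrable_const _) ?_
      · filter_upwards [eventually_mem_nhdsWithin] with x hx
        filter_upwards [hub x hx] with y hy
        rw [Real.norm_eq_abs, abs_of_pos (Real.exp_pos _)]
        exact hy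
      · refine (ae_restrict_mem hDo.measurableSet).mono fun y _ => ?_
        have hcont : Continuous fun v : EuclideanSpace ℝ (Fin du) =>
            Real.exp ((inner ℝ (emulVec Q v) (emulVec K (u y)) : ℝ)) :=
          Real.continuous_exp.comp ((emulVec_continuous Q).inner continuous_const)
        exact hcont.continuousAt.comp_continuousWithinAt (hc x0 hx0)
    -- continuity of the numerator
    have hnum : ContinuousOn (fun x => ∫ y in D,
        Real.exp ((inner ℝ (emulVec Q (u x)) (emulVec K (u y)) : ℝ)) • emulVec V (u y))
        (closure D) := by
      intro x0 hx0
      refine continuousWithinAt_of_dominated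
        (bound := fun _ => Real.exp c * (matOpNorm V * M))
        (Eventually.of_forall fun x => (hgm x).smul hVAE) ?_ (integrable_const _) ?_
      · filter_upwards [eventually_mem_nhdsWithin] with x hx
        filter_upwards [hub x hx, hbM] with y hy1 hy2
        rw [norm_smul, Real.norm_eq_abs, abs_of_pos (Real.exp_pos _)]
        exact mul_le_mul hy1 (emulVec_norm_le' V hy2) (norm_nonneg _) (Real.exp_pos _).le
      · refine (ae_restrict_mem hDo.measurableSet).mono fun y _ => ?_
        have hcont : Continuous fun v : EuclideanSpace ℝ (Fin du) =>
            Real.exp ((inner ℝ (emulVec Q v) (emulVec K (u y)) : ℝ)) • emulVec V (u y) :=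
          (Real.continuous_exp.comp ((emulVec_continuous Q).inner continuous_const)).smul
            continuous_const
        exact hcont.continuousAt.comp_continuousWithinAt (hc x0 hx0)
    -- denominator nonzero on closure D
    have hne : ∀ x ∈ closure D, (∫ s in D,
        Real.exp ((inner ℝ (emulVec Q (u x)) (emulVec K (u s)) : ℝ))) ≠ 0 := by
      intro x hx
      have hcx : matOpNorm Q * ‖u x‖ * (matOpNorm K * M) ≤ c := by
        have h0 : 0 ≤ matOpNorm K * M := mul_nonneg (matOpNorm_nonneg K) hM
        have h1 : matOpNorm Q * ‖u x‖ ≤ matOpNorm Q * M :=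
          mul_le_mul_of_nonneg_left (hC' x hx) (norm_nonneg _)
        exact mul_le_mul_of_nonneg_right h1 h0
      obtain ⟨hlbd, _⟩ := den_pos (Q := Q) (K := K) hpos hfin huAE hM hbM x hcx
      have : 0 < (volume D).toReal := ENNReal.toReal_pos hpos.ne' hfin.ne
      have h2 : (0 : ℝ) < Real.exp (-c) * (volume D).toReal := mul_pos (Real.exp_pos _) this
      exact (lt_of_lt_of_le h2 hlbd).ne'
    exact (hden.inv₀ hne).smul hnum
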